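/- Let p, q ∈ ℕ, let ℓ be a permutation of [q], and let n ∈ ℕ^q. If every realistic (p, n∘ℓ)-album of pictures is realisable, then every realistic (p, n)-album of pictures is realisable. In other words, the property 'realistic implies realisable' for albums is invariant under permuting the modes of the ambient tensor shape. -/
import Mathlib


/-- An album of pictures is *realistic* if overlapping projections of its pictures
agree (entries compared via their values in `ℕ`, since the shapes agree). -/
def RealisticAlbum (p q : ℕ) (n : Fin q → ℕ)
    (album : (i : Fin p → Fin q) → ((∀ k : Fin p, Fin (n (i k))) → ℤ)) : Prop :=
  ∀ (i j : Fin p → Fin q), StrictMono i → StrictMono j →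
    ∀ (r s : Fin (p - 1) → Fin p), StrictMono r → StrictMono s →
    (∀ k, i (r k) = j (s k)) →
    ∀ a : ∀ k : Fin (p - 1), Fin (n (i (r k))),
      (∑ b : ∀ k : Fin p, Fin (n (i k)),
          if ∀ k, b (r k) = a k then album i b else 0)
      = ∑ c : ∀ k : Fin p, Fin (n (j k)),
          if ∀ k, ((c (s k) : ℕ) = (a k : ℕ)) then album j c else 0

/-- An album is *realisable* if it consists of the projections of a single tensor. -/
def RealisableAlbum (p q : ℕ) (n : Fin q → ℕ)
    (album : (i : Fin p → Fin q) → ((∀ k : Fin p, Fin (n (i k))) → ℤ)) : Prop :=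
  ∃ T : (∀ j : Fin q, Fin (n j)) → ℤ,
    ∀ i : Fin p → Fin q, StrictMono i →
      ∀ a : ∀ k : Fin p, Fin (n (i k)),
        album i a = ∑ b : ∀ j : Fin q, Fin (n j),
          if ∀ k, b (i k) = a k then T b else 0

lemma sorted_unique {m N : ℕ} {f h : Fin m → Fin N} (hf : StrictMono f) (hh : StrictMono h)
    (hsub : ∀ k, f k ∈ Finset.image h Finset.univ) : f = h := by
  have hcard : (Finset.image h Finset.univ).card = m := by
    rw [Finset.card_image_of_injective _ hh.injective, Finset.card_univ, Fintype.card_fin]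
  have h1 := Finset.orderEmbOfFin_unique hcard
    (fun x => Finset.mem_image_of_mem _ (Finset.mem_univ x)) hh
  have h2 := Finset.orderEmbOfFin_unique hcard hsub hf
  exact h2.trans h1.symm

lemma exists_sort {m N : ℕ} (f : Fin m → Fin N) (hf : Function.Injective f) :
    ∃ g : Fin m → Fin N, ∃ σ : Equiv.Perm (Fin m), StrictMono g ∧ ∀ k, g (σ k) = f k := by
  have hcard : (Finset.image f Finset.univ).card = m := by
    rw [Finset.card_image_of_injective _ hf, Finset.card_univ, Fintype.card_fin]
  set s := Finset.image f Finset.univ with hs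
  have hmem : ∀ k, f k ∈ s := fun k => Finset.mem_image_of_mem _ (Finset.mem_univ k)
  obtain ⟨e1, he1⟩ : ∃ e1 : Fin m ≃ s, ∀ k, (e1 k : Fin N) = f k := by
    refine ⟨Equiv.ofBijective (fun k => ⟨f k, hmem k⟩) ?_, fun _ => rfl⟩
    rw [Fintype.bijective_iff_injective_and_card]
    constructor
    · intro a b hab
      exact hf (congrArg Subtype.val hab)
    · rw [Fintype.card_coe, hcard, Fintype.card_fin]
  refine ⟨s.orderEmbOfFin hcard, e1.trans (s.orderIsoOfFin hcard).toEquiv.symm,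
    (s.orderEmbOfFin hcard).strictMono, fun k => ?_⟩
  have : (s.orderIsoOfFin hcard) ((s.orderIsoOfFin hcard).symm (e1 k)) = e1 k :=
    (s.orderIsoOfFin hcard).apply_symm_apply _
  have := congrArg Subtype.val this
  rw [Finset.coe_orderIsoOfFin_apply] at this
  rw [he1] at this
  simpa using this

lemma album_congr {p q : ℕ} {n : Fin q → ℕ}
    (album : (i : Fin p → Fin q) → ((∀ k : Fin p, Fin (n (i k))) → ℤ))
    {f f' : Fin p → Fin q} (h : f = f')
    (a : ∀ k, Fin (n (f k))) (a' : ∀ k, Fin (n (f' k)))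
    (ha : ∀ k, (a k : ℕ) = (a' k : ℕ)) : album f a = album f' a' := by
  subst h
  congr 1
  funext k
  exact Fin.ext (ha k)

/-- Rotating the ambient shape by a permutation `ℓ` of the modes preserves the property
"every realistic album is realisable": if every realistic `(p, n ∘ ℓ)`-album is
realisable, then every realistic `(p, n)`-album is realisable. -/
theorem rotating_preserves_realisability (p q : ℕ) (hp : 0 < p) (hq : 0 < q)
    (ℓ : Equiv.Perm (Fin q)) (n : Fin q → ℕ) (hn : ∀ j, 0 < n j)
    (hperm : ∀ album' : (i : Fin p → Fin q) → ((∀ k : Fin p, Fin ((n ∘ ℓ) (i k))) → ℤ),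
      RealisticAlbum p q (n ∘ ℓ) album' → RealisableAlbum p q (n ∘ ℓ) album') :
    ∀ album : (i : Fin p → Fin q) → ((∀ k : Fin p, Fin (n (i k))) → ℤ),
      RealisticAlbum p q n album → RealisableAlbum p q n album := by
  intro album hreal
  -- For each strictly increasing `i`, sort `ℓ ∘ i` into an increasing map `g i`
  -- together with a permutation `σ i` of the positions.
  have hsort : ∀ i : Fin p → Fin q, ∃ gi : Fin p → Fin q, ∃ σi : Equiv.Perm (Fin p),
      StrictMono i → (StrictMono gi ∧ ∀ k, gi (σi k) = ℓ (i k)) := by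
    intro i
    by_cases hi : StrictMono i
    · obtain ⟨g0, σ0, h1, h2⟩ := exists_sort (fun k => ℓ (i k))
        (fun a b hab => hi.injective (ℓ.injective hab))
      exact ⟨g0, σ0, fun _ => ⟨h1, h2⟩⟩
    · exact ⟨i, 1, fun h => absurd h hi⟩
  choose g σ hg using hsort
  have hcastA : ∀ (i : Fin p → Fin q), StrictMono i → ∀ k : Fin p,
      (n ∘ ℓ) (i k) = n (g i (σ i k)) := by
    intro i hi k
    rw [Function.comp_apply, (hg i hi).2]
  -- the transported album
  set album' : (i : Fin p → Fin q) → ((∀ k : Fin p, Fin ((n ∘ ℓ) (i k))) → ℤ) :=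
    fun i a => if hi : StrictMono i then
      album (g i) (Equiv.piCongr (σ i) (fun k => finCongr (hcastA i hi k)) a) else 0
    with halb'
  have halb : ∀ (i : Fin p → Fin q) (hi : StrictMono i) (a : ∀ k : Fin p, Fin ((n ∘ ℓ) (i k))),
      album' i a = album (g i) (Equiv.piCongr (σ i) (fun k => finCongr (hcastA i hi k)) a) := by
    intro i hi a
    simp only [halb']
    exact dif_pos hi
  -- the transported album is realistic
  have hreal' : RealisticAlbum p q (n ∘ ℓ) album' := by
    intro i j hi hj r s hr hs hrs a
    obtain ⟨rh, τ, hrh, hτ⟩ := exists_sort (fun k => σ i (r k))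
      (fun x y hxy => hr.injective ((σ i).injective hxy))
    obtain ⟨sh, τ', hsh, hτ'⟩ := exists_sort (fun k => σ j (s k))
      (fun x y hxy => hs.injective ((σ j).injective hxy))
    have claim1 : g i ∘ rh = g j ∘ sh := by
      apply sorted_unique ((hg i hi).1.comp hrh) ((hg j hj).1.comp hsh)
      intro m
      have e1 : g i (rh m) = ℓ (i (r (τ.symm m))) := by
        conv_lhs => rw [← Equiv.apply_symm_apply τ m]
        rw [hτ, (hg i hi).2]
      have e2 : ℓ (i (r (τ.symm m))) = g j (sh (τ' (τ.symm m))) := by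
        rw [hrs, ← (hg j hj).2, hτ']
      exact Finset.mem_image.2 ⟨τ' (τ.symm m), Finset.mem_univ _, (e1.trans e2).symm⟩
    have claim2 : τ' = τ := by
      apply Equiv.ext
      intro k
      have h1 : g i (rh (τ k)) = g j (sh (τ' k)) := by
        rw [hτ, hτ', (hg i hi).2, (hg j hj).2, hrs]
      have h2 : g j (sh (τ' k)) = g i (rh (τ' k)) := (congrFun claim1 (τ' k)).symm
      exact ((hg i hi).1.comp hrh).injective (h1.trans h2).symm
    have hτ'' : ∀ k, sh (τ k) = σ j (s k) := by
      intro k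
      rw [← claim2]
      exact hτ' k
    -- the sorted common sub-tuple argument
    have hcast2 : ∀ m : Fin (p - 1), (n ∘ ℓ) (i (r (τ.symm m))) = n (g i (rh m)) := by
      intro m
      rw [hcastA i hi (r (τ.symm m)), ← hτ, Equiv.apply_symm_apply]
    set aa : ∀ m : Fin (p - 1), Fin (n (g i (rh m))) :=
      fun m => Fin.cast (hcast2 m) (a (τ.symm m)) with haa
    have H := hreal (g i) (g j) (hg i hi).1 (hg j hj).1 rh sh hrh hsh
      (fun m => congrFun claim1 m) aa
    have hcond1 : ∀ b : ∀ k : Fin p, Fin ((n ∘ ℓ) (i k)),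
        ((∀ k, b (r k) = a k) ↔
          (∀ m, (Equiv.piCongr (Z := fun m => Fin (n (g i m))) (σ i) (fun k => finCongr (hcastA i hi k)) b) (rh m) = aa m)) := by
      intro b
      constructor
      · intro h m
        have e : rh m = σ i (r (τ.symm m)) := by rw [← hτ, Equiv.apply_symm_apply]
        apply Fin.ext
        conv_lhs => rw [e, Equiv.piCongr_apply_apply]
        simp [haa, h (τ.symm m)]
      · intro h k
        have hv := congrArg Fin.val (h (τ k))
        conv_lhs at hv => rw [hτ, Equiv.piCongr_apply_apply]
        apply Fin.ext
        simp [haa] at hv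
        rwa [Equiv.symm_apply_apply] at hv
    have hcond2 : ∀ c : ∀ k : Fin p, Fin ((n ∘ ℓ) (j k)),
        ((∀ k, ((c (s k) : ℕ)) = ((a k : ℕ))) ↔
          (∀ m, (((Equiv.piCongr (Z := fun m => Fin (n (g j m))) (σ j) (fun k => finCongr (hcastA j hj k)) c) (sh m) : ℕ))
            = ((aa m : ℕ)))) := by
      intro c
      constructor
      · intro h m
        have e : sh m = σ j (s (τ.symm m)) := by rw [← hτ'', Equiv.apply_symm_apply]
        conv_lhs => rw [e, Equiv.piCongr_apply_apply]
        simpa [haa] using h (τ.symm m)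
      · intro h k
        have hv := h (τ k)
        conv_lhs at hv => rw [hτ'', Equiv.piCongr_apply_apply]
        simp [haa] at hv
        rwa [Equiv.symm_apply_apply] at hv
    calc (∑ b : ∀ k : Fin p, Fin ((n ∘ ℓ) (i k)),
            if ∀ k, b (r k) = a k then album' i b else 0)
        = ∑ b' : ∀ k : Fin p, Fin (n (g i k)),
            (if ∀ m, b' (rh m) = aa m then album (g i) b' else 0) := by
          refine Fintype.sum_equiv (Equiv.piCongr (Z := fun m => Fin (n (g i m))) (σ i) (fun k => finCongr (hcastA i hi k)))
            _ _ (fun b => ?_)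
          rw [halb i hi b]
          exact if_congr (hcond1 b) rfl rfl
      _ = ∑ c' : ∀ k : Fin p, Fin (n (g j k)),
            (if ∀ m, ((c' (sh m) : ℕ)) = ((aa m : ℕ)) then album (g j) c' else 0) := H
      _ = ∑ c : ∀ k : Fin p, Fin ((n ∘ ℓ) (j k)),
            (if ∀ k, ((c (s k) : ℕ)) = ((a k : ℕ)) then album' j c else 0) := by
          refine (Fintype.sum_equiv (Equiv.piCongr (Z := fun m => Fin (n (g j m))) (σ j) (fun k => finCongr (hcastA j hj k)))
            _ _ (fun c => ?_)).symm
          rw [halb j hj c]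
          exact if_congr (hcond2 c) rfl rfl
  -- obtain the tensor for the transported album
  obtain ⟨T', hT'⟩ := hperm album' hreal'
  set Gq : (∀ a : Fin q, Fin ((n ∘ ℓ) a)) ≃ (∀ b : Fin q, Fin (n b)) :=
    Equiv.piCongr ℓ (fun a => finCongr rfl) with hGq
  refine ⟨fun b => T' (Gq.symm b), ?_⟩
  intro i hi a
  obtain ⟨i₀, π, hi₀, hπ⟩ := exists_sort (fun k => ℓ.symm (i k))
    (fun x y hxy => hi.injective (ℓ.symm.injective hxy))
  have hgi : g i₀ = i := by
    apply sorted_unique (hg i₀ hi₀).1 hi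
    intro m
    have e1 : g i₀ m = ℓ (i₀ ((σ i₀).symm m)) := by
      conv_lhs => rw [← Equiv.apply_symm_apply (σ i₀) m]
      rw [(hg i₀ hi₀).2]
    have e2 : ℓ (i₀ ((σ i₀).symm m)) = i (π.symm ((σ i₀).symm m)) := by
      conv_lhs => rw [← Equiv.apply_symm_apply π ((σ i₀).symm m)]
      rw [hπ, Equiv.apply_symm_apply]
    rw [e1, e2]
    exact Finset.mem_image_of_mem _ (Finset.mem_univ _)
  have hli₀ : ∀ k, ℓ (i₀ k) = i (σ i₀ k) := by
    intro k
    rw [← (hg i₀ hi₀).2, hgi]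
  set E₀ : (∀ k : Fin p, Fin ((n ∘ ℓ) (i₀ k))) ≃ (∀ m : Fin p, Fin (n (g i₀ m))) :=
    Equiv.piCongr (σ i₀) (fun k => finCongr (hcastA i₀ hi₀ k)) with hE₀
  set am : ∀ m : Fin p, Fin (n (g i₀ m)) :=
    fun m => Fin.cast (by rw [hgi]) (a m) with ham
  have step1 : album i a = album' i₀ (E₀.symm am) := by
    rw [halb i₀ hi₀, Equiv.apply_symm_apply]
    exact (album_congr album hgi am a (fun k => by simp [ham])).symm
  rw [step1, hT' i₀ hi₀ (E₀.symm am)]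
  refine (Fintype.sum_equiv Gq.symm _ _ (fun b => ?_)).symm
  refine if_congr ?_ rfl rfl
  have hval1 : ∀ k, ((Gq.symm b) (i₀ k) : ℕ) = (b (ℓ (i₀ k)) : ℕ) := by
    intro k
    simp [hGq]
  have hval2 : ∀ k, ((E₀.symm am) k : ℕ) = (a (σ i₀ k) : ℕ) := by
    intro k
    simp [hE₀, ham]
  constructor
  · intro h k
    apply Fin.ext
    rw [hval1, hval2, hli₀]
    exact congrArg Fin.val (h (σ i₀ k))
  · intro h m
    have h' := h ((σ i₀).symm m)
    have := congrArg Fin.val h'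
    rw [hval1, hval2, hli₀, Equiv.apply_symm_apply] at this
    exact Fin.ext this
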